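/- If (a,b,c) is a positive integer solution of a² + b² + c² = 3abc with a ≥ b ≥ c and a > 1, then 3bc - a < a, i.e., mutation at the largest entry strictly decreases it. -/
import Mathlib


/-- If `(a,b,c)` is a positive integer solution of the Markov equation with
`a ≥ b ≥ c` and `a > 1`, then mutation at the largest entry strictly decreases it:
`3bc - a < a`. -/
theorem markov_mutation_decreases (a b c : ℤ) (ha : 0 < a) (hb : 0 < b) (hc : 0 < c)
    (hab : b ≤ a) (hbc : c ≤ b) (ha1 : 1 < a)
    (h : a ^ 2 + b ^ 2 + c ^ 2 = 3 * a * b * c) :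
    3 * b * c - a < a := by
  by_contra h2
  push_neg at h2
  have key : a * (3 * b * c - a) = b ^ 2 + c ^ 2 := by ring_nf; linarith
  have h3 : a ^ 2 ≤ b ^ 2 + c ^ 2 := by nlinarith
  have hc1 : c = 1 := by nlinarith
  subst hc1
  have hb1 : a * b ≤ 2 := by nlinarith
  have : a = 2 ∧ b = 1 := by constructor <;> nlinarith
  omega
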